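/- arXiv:2407.14080 — 3 statements merged into one kernel-verified Lean document; each statement's English description precedes it below -/
import Mathlib

section
/- Let G be a graph on n vertices, U ⊆ V with s ≤ |U| ≤ n/2 where n ≥ 4k and k ≤ |U|·n/4. If each non-edge of G is added independently with probability p, then the probability that no edge is added across the cut (U, V∖U), given that the cut currently has k−1 edges, is at most e^{−s·p·n/4}. -/
open scoped Classical

/-- The size of the edge cut `E(U, V \ U)` of `G`: the number of edges with exactly one
endpoint in `U`. -/
noncomputable def cutSize {V : Type*} [Fintype V] (G : SimpleGraph V) (U : Finset V) : ℕ :=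
  ((U ×ˢ Uᶜ).filter (fun p => G.Adj p.1 p.2)).card

/-- The collection `S_k(G)` of nonempty proper vertex subsets with cut size `< k`. -/
noncomputable def smallCuts {V : Type*} [Fintype V] (G : SimpleGraph V) (k : ℕ) :
    Finset (Finset V) :=
  Finset.univ.filter (fun U => U.Nonempty ∧ U ≠ Finset.univ ∧ cutSize G U < k)

/-- `s_k(G)`: the minimum cardinality of a member of `S_k(G)`, or `n` if `S_k(G) = ∅`. -/
noncomputable def sk {V : Type*} [Fintype V] (G : SimpleGraph V) (k : ℕ) : ℕ :=
  if h : ((smallCuts G k).image Finset.card).Nonempty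
    then ((smallCuts G k).image Finset.card).min' h
    else Fintype.card V

/-- For a cut `(U, V∖U)` currently of size `k-1`, with `s ≤ |U| ≤ n/2`, `n ≥ 4k` and
`k ≤ |U|·n/4`, the probability that none of the `|U|(n-|U|) - (k-1)` potential non-edges
across the cut is added (each added independently with probability `p`) is at most
`e^{-s·p·n/4}`. -/
theorem cut_survival_prob_bound {V : Type*} [Fintype V] (G : SimpleGraph V)
    (n s k : ℕ) (hn : n = Fintype.card V) (hk : 1 ≤ k) (hnk : 4 * k ≤ n)
    (U : Finset V) (hs : s ≤ U.card) (hhalf : 2 * U.card ≤ n)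
    (hkU : 4 * k ≤ U.card * n)
    (hcut : cutSize G U = k - 1)
    (p : ℝ) (hp0 : 0 ≤ p) (hp1 : p ≤ 1) :
    (1 - p) ^ (U.card * (n - U.card) - (k - 1)) ≤
      Real.exp (-((s : ℝ) * p * n) / 4) := by
  set m := U.card * (n - U.card) - (k - 1) with hm
  have hkey : s * n ≤ 4 * m := by
    have h1 : n ≤ 2 * (n - U.card) := by omega
    have h2 : U.card * n ≤ 2 * (U.card * (n - U.card)) := by
      calc U.card * n ≤ U.card * (2 * (n - U.card)) :=
            Nat.mul_le_mul_left _ h1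
        _ = 2 * (U.card * (n - U.card)) := by ring
    have h3 : 4 * (k - 1) + 4 ≤ U.card * n := by omega
    have h4 : s * n ≤ U.card * n := Nat.mul_le_mul_right _ hs
    omega
  have h1 : (1 - p) ^ m ≤ Real.exp (-p) ^ m := by
    apply pow_le_pow_left₀ (by linarith)
    linarith [Real.add_one_le_exp (-p)]
  have h2 : Real.exp (-p) ^ m = Real.exp (-(p * m)) := by
    rw [← Real.exp_nat_mul]; ring_nf
  have h3 : Real.exp (-(p * m)) ≤ Real.exp (-((s : ℝ) * p * n) / 4) := by
    apply Real.exp_le_exp.mpr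
    have : (s : ℝ) * n ≤ 4 * m := by exact_mod_cast hkey
    nlinarith
  calc (1 - p) ^ m ≤ Real.exp (-p) ^ m := h1
    _ = Real.exp (-(p * m)) := h2
    _ ≤ _ := h3
end

section
/- Let G be a (k−1)-edge-connected graph on n ≥ 4k vertices, c > 1, and s = s_k(G). If each non-edge is added independently with probability p = 4(c+2)·log(n)/(s·n), then the probability that the resulting graph fails to be k-edge-connected is at most n^{−c}, assuming the number of minimum cuts (cuts of size k−1) of G is at most n². -/
open scoped Classical

/-- The probability that the random set `S` of added non-edges of `G` (each non-edge
added independently with probability `p`) satisfies the event `A`. -/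
noncomputable def addProb {V : Type*} [Fintype V] (G : SimpleGraph V) (p : ℝ)
    (A : Finset (Sym2 V) → Prop) : ℝ :=
  ∑ S ∈ Gᶜ.edgeFinset.powerset,
    if A S then p ^ S.card * (1 - p) ^ (Gᶜ.edgeFinset.card - S.card) else 0

/-- `G` is `k`-edge-connected: every nonempty proper subset has cut size at least `k`. -/
def kEdgeConnected {V : Type*} [Fintype V] (G : SimpleGraph V) (k : ℕ) : Prop :=
  ∀ U : Finset V, U.Nonempty → U ≠ Finset.univ → k ≤ @cutSize V _ G U

lemma sum_powerset_weight {α : Type*} [DecidableEq α] (A : Finset α) (p : ℝ) :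
    ∑ S ∈ A.powerset, p ^ S.card * (1 - p) ^ (A.card - S.card) = 1 := by
  have h := Finset.prod_add (fun _ : α => p) (fun _ => (1 - p)) A
  simp only [Finset.prod_const] at h
  rw [show p + (1 - p) = 1 by ring, one_pow] at h
  calc ∑ S ∈ A.powerset, p ^ S.card * (1 - p) ^ (A.card - S.card)
      = ∑ S ∈ A.powerset, p ^ S.card * (1 - p) ^ ((A \ S).card) := by
        apply Finset.sum_congr rfl
        intro t ht
        rw [Finset.card_sdiff_of_subset (Finset.mem_powerset.mp ht)]
    _ = 1 := h.symm

lemma addProb_eq_filter {V : Type*} [Fintype V] (G : SimpleGraph V) (p : ℝ)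
    (A : Finset (Sym2 V) → Prop) :
    addProb G p A = ∑ S ∈ Gᶜ.edgeFinset.powerset.filter A,
      p ^ S.card * (1 - p) ^ (Gᶜ.edgeFinset.card - S.card) :=
  (Finset.sum_filter _ _).symm

lemma addProb_avoid {V : Type*} [Fintype V] (G : SimpleGraph V) (p : ℝ)
    (T : Finset (Sym2 V)) (hT : T ⊆ Gᶜ.edgeFinset) :
    addProb G p (fun S => S ∩ T = ∅) = (1 - p) ^ T.card := by
  have main : (∑ S ∈ Gᶜ.edgeFinset.powerset,
      if S ∩ T = ∅ then p ^ S.card * (1 - p) ^ (Gᶜ.edgeFinset.card - S.card) else 0)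
      = (1 - p) ^ T.card := ?_
  · unfold addProb
    refine Eq.trans (Finset.sum_congr rfl fun S _ => ?_) main
    congr 1
  have hsub : (Gᶜ.edgeFinset \ T).powerset ⊆ Gᶜ.edgeFinset.powerset := by
    intro S hS
    rw [Finset.mem_powerset] at hS ⊢
    exact hS.trans (Finset.sdiff_subset)
  have hzero : ∀ S ∈ Gᶜ.edgeFinset.powerset, S ∉ (Gᶜ.edgeFinset \ T).powerset →
      (if S ∩ T = ∅ then p ^ S.card * (1 - p) ^ (Gᶜ.edgeFinset.card - S.card) else 0) = 0 := by
    intro S hS hS'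
    rw [if_neg]
    intro hcon
    apply hS'
    rw [Finset.mem_powerset] at hS ⊢
    rw [Finset.subset_sdiff]
    refine ⟨hS, Finset.disjoint_left.mpr fun a ha hb => ?_⟩
    have : a ∈ S ∩ T := Finset.mem_inter.mpr ⟨ha, hb⟩
    simp [hcon] at this
  rw [← Finset.sum_subset hsub hzero]
  have hstep : ∀ S ∈ (Gᶜ.edgeFinset \ T).powerset,
      (if S ∩ T = ∅ then p ^ S.card * (1 - p) ^ (Gᶜ.edgeFinset.card - S.card) else 0)
      = (p ^ S.card * (1 - p) ^ ((Gᶜ.edgeFinset \ T).card - S.card)) * (1 - p) ^ T.card := by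
    intro S hS
    rw [Finset.mem_powerset, Finset.subset_sdiff] at hS
    rw [if_pos (by rw [← Finset.disjoint_iff_inter_eq_empty]; exact hS.2)]
    have hle : S.card ≤ (Gᶜ.edgeFinset \ T).card :=
      Finset.card_le_card (Finset.subset_sdiff.mpr hS)
    have hc : Gᶜ.edgeFinset.card = (Gᶜ.edgeFinset \ T).card + T.card :=
      (Finset.card_sdiff_add_card_eq_card hT).symm
    rw [mul_assoc, ← pow_add]
    congr 2
    omega
  rw [Finset.sum_congr rfl hstep, ← Finset.sum_mul, sum_powerset_weight, one_mul]

lemma addProb_le_sum {V : Type*} {ι : Type*} [Fintype V] (G : SimpleGraph V) (p : ℝ)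
    (hp0 : 0 ≤ p) (hp1 : p ≤ 1)
    (A : Finset (Sym2 V) → Prop) (F : Finset ι) (B : ι → Finset (Sym2 V) → Prop)
    (h : ∀ S, A S → ∃ i ∈ F, B i S) :
    addProb G p A ≤ ∑ i ∈ F, addProb G p (B i) := by
  unfold addProb
  rw [Finset.sum_comm]
  apply Finset.sum_le_sum
  intro S _
  have hw : 0 ≤ p ^ S.card * (1 - p) ^ (Gᶜ.edgeFinset.card - S.card) := by
    apply mul_nonneg (pow_nonneg hp0 _) (pow_nonneg (by linarith) _)
  by_cases hA : A S
  · obtain ⟨i, hiF, hiB⟩ := h S hA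
    rw [if_pos hA]
    have h2 := Finset.single_le_sum
      (f := fun i => if B i S then p ^ S.card * (1 - p) ^ (Gᶜ.edgeFinset.card - S.card) else 0)
      (fun j _ => by
        split
        · exact hw
        · exact le_rfl) hiF
    simp only [hiB, if_true] at h2
    exact h2
  · rw [if_neg hA]
    apply Finset.sum_nonneg
    intro j _
    split
    · exact hw
    · exact le_rfl

lemma cutSize_mono {V : Type*} [Fintype V] {G H : SimpleGraph V} (h : G ≤ H) (U : Finset V) :
    cutSize G U ≤ cutSize H U := by
  apply Finset.card_le_card
  apply Finset.monotone_filter_right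
  intro q _ hq
  exact h hq

lemma cutSize_compl {V : Type*} [Fintype V] (G : SimpleGraph V) (U : Finset V) :
    cutSize G Uᶜ = cutSize G U := by
  unfold cutSize
  rw [compl_compl]
  refine Finset.card_nbij' (fun q => q.swap) (fun q => q.swap) ?_ ?_ ?_ ?_
  · intro x hx
    simp only [Finset.mem_coe, Finset.mem_filter, Finset.mem_product, Prod.fst_swap, Prod.snd_swap] at hx ⊢
    exact ⟨⟨hx.1.2, hx.1.1⟩, hx.2.symm⟩
  · intro x hx
    simp only [Finset.mem_coe, Finset.mem_filter, Finset.mem_product, Prod.fst_swap, Prod.snd_swap] at hx ⊢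
    exact ⟨⟨hx.1.2, hx.1.1⟩, hx.2.symm⟩
  · intro x _
    rfl
  · intro x _
    rfl

/-- If `G` is `(k-1)`-edge-connected on `n ≥ 4k` vertices with at most `n²` minimum
cuts, `s = s_k(G)`, `c > 1`, and each non-edge is added independently with probability
`p = 4(c+2)·log n/(s·n)`, then the probability that the resulting graph fails to be
`k`-edge-connected is at most `n^{-c}`. -/
theorem increase_connectivity_whp {V : Type*} [Fintype V] (G : SimpleGraph V)
    (n s k : ℕ) (hn : n = Fintype.card V) (hk : 1 ≤ k) (hnk : 4 * k ≤ n)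
    (hconn : kEdgeConnected G (k - 1))
    (hs : s = sk G k)
    (hkarger : (smallCuts G k).card ≤ n ^ 2)
    (c p : ℝ) (hc : 1 < c) (hp : p = 4 * (c + 2) * Real.log n / (s * n)) (hp1 : p ≤ 1) :
    addProb G p
        (fun S => ¬ kEdgeConnected (G ⊔ SimpleGraph.fromEdgeSet (↑S : Set (Sym2 V))) k)
      ≤ (n : ℝ) ^ (-c) := by
  have hn4 : 4 ≤ n := by omega
  have hn1 : (1:ℝ) ≤ n := by exact_mod_cast (by omega : 1 ≤ n)
  have hnpos : (0:ℝ) < n := by linarith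
  have hlog : 0 ≤ Real.log n := Real.log_nonneg hn1
  have hp0 : 0 ≤ p := by
    rw [hp]
    apply div_nonneg
    · nlinarith
    · positivity
  set T : Finset V → Finset (Sym2 V) := fun U =>
    ((U ×ˢ Uᶜ).filter (fun q => ¬ G.Adj q.1 q.2)).image (fun q => s(q.1, q.2)) with hTdef
  have hTsub : ∀ U, T U ⊆ Gᶜ.edgeFinset := by
    intro U e he
    simp only [hTdef, Finset.mem_image, Finset.mem_filter, Finset.mem_product] at he
    obtain ⟨⟨a, b⟩, ⟨⟨ha, hb⟩, hnadj⟩, rfl⟩ := he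
    rw [SimpleGraph.mem_edgeFinset, SimpleGraph.mem_edgeSet, SimpleGraph.compl_adj]
    exact ⟨fun hab => (Finset.mem_compl.mp hb) (hab ▸ ha), hnadj⟩
  have himp : ∀ S : Finset (Sym2 V), ¬ kEdgeConnected (G ⊔ SimpleGraph.fromEdgeSet (↑S : Set (Sym2 V))) k →
      ∃ U ∈ smallCuts G k, S ∩ T U = ∅ := by
    intro S hS
    unfold kEdgeConnected at hS
    push_neg at hS
    obtain ⟨U, hU1, hU2, hU3⟩ := hS
    have hmono : cutSize G U ≤ cutSize (G ⊔ SimpleGraph.fromEdgeSet (↑S : Set (Sym2 V))) U :=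
      cutSize_mono le_sup_left U
    have hUsmall : U ∈ smallCuts G k := by
      simp only [smallCuts, Finset.mem_filter, Finset.mem_univ, true_and]
      exact ⟨hU1, hU2, by omega⟩
    refine ⟨U, hUsmall, ?_⟩
    by_contra hne
    obtain ⟨e, he⟩ := Finset.nonempty_iff_ne_empty.mpr hne
    rw [Finset.mem_inter] at he
    obtain ⟨heS, heT⟩ := he
    simp only [hTdef, Finset.mem_image, Finset.mem_filter, Finset.mem_product] at heT
    obtain ⟨⟨a, b⟩, ⟨⟨ha, hb⟩, hnadj⟩, rfl⟩ := heT
    have hab : a ≠ b := fun h => (Finset.mem_compl.mp hb) (h ▸ ha)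
    have hadj : (G ⊔ SimpleGraph.fromEdgeSet (↑S : Set (Sym2 V))).Adj a b :=
      Or.inr ((SimpleGraph.fromEdgeSet_adj _).mpr ⟨by exact_mod_cast heS, hab⟩)
    have hss : (U ×ˢ Uᶜ).filter (fun q => G.Adj q.1 q.2)
        ⊂ (U ×ˢ Uᶜ).filter
          (fun q => (G ⊔ SimpleGraph.fromEdgeSet (↑S : Set (Sym2 V))).Adj q.1 q.2) := by
      refine ⟨Finset.monotone_filter_right _ (fun q _ hq => Or.inl hq), fun hcon => ?_⟩
      have hmem : (a, b) ∈ (U ×ˢ Uᶜ).filter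
          (fun q => (G ⊔ SimpleGraph.fromEdgeSet (↑S : Set (Sym2 V))).Adj q.1 q.2) := by
        simp only [Finset.mem_filter, Finset.mem_product]
        exact ⟨⟨ha, hb⟩, hadj⟩
      have := hcon hmem
      simp only [Finset.mem_filter] at this
      exact hnadj this.2
    have hlt : cutSize G U < cutSize (G ⊔ SimpleGraph.fromEdgeSet (↑S : Set (Sym2 V))) U := by
      have h0 := Finset.card_lt_card hss
      unfold cutSize
      convert h0 using 3
    have hc1 := hconn U hU1 hU2
    omega
  have key := addProb_le_sum G p hp0 hp1 _ (smallCuts G k) (fun U S => S ∩ T U = ∅) himp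
  refine le_trans key ?_
  have percut : ∀ U ∈ smallCuts G k,
      addProb G p (fun S => S ∩ T U = ∅) ≤ (n : ℝ) ^ (-(c+2)) := by
    intro U hU
    have hU' := hU
    simp only [smallCuts, Finset.mem_filter, Finset.mem_univ, true_and] at hU'
    obtain ⟨hU1, hU2, hU3⟩ := hU'
    have hUc : Uᶜ ∈ smallCuts G k := by
      simp only [smallCuts, Finset.mem_filter, Finset.mem_univ, true_and]
      refine ⟨?_, ?_, ?_⟩
      · rw [Finset.nonempty_iff_ne_empty, Ne, Finset.compl_eq_empty_iff]
        exact hU2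
      · rw [Ne, Finset.compl_eq_univ_iff]
        exact Finset.nonempty_iff_ne_empty.mp hU1
      · rw [cutSize_compl]
        exact hU3
    have hne : ((smallCuts G k).image Finset.card).Nonempty :=
      ⟨U.card, Finset.mem_image_of_mem _ hU⟩
    have hsk : s = ((smallCuts G k).image Finset.card).min' hne := by
      rw [hs, sk, dif_pos hne]
    have hsU : s ≤ U.card := hsk ▸ Finset.min'_le _ _ (Finset.mem_image_of_mem _ hU)
    have hsUc : s ≤ Uᶜ.card := hsk ▸ Finset.min'_le _ _ (Finset.mem_image_of_mem _ hUc)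
    have hs1 : 1 ≤ s := by
      have hmem' := Finset.min'_mem _ hne
      rw [← hsk] at hmem'
      obtain ⟨W, hW, hWc⟩ := Finset.mem_image.mp hmem'
      simp only [smallCuts, Finset.mem_filter, Finset.mem_univ, true_and] at hW
      rw [← hWc]
      exact Finset.card_pos.mpr hW.1
    have hinj : Set.InjOn (fun q : V × V => s(q.1, q.2))
        ↑((U ×ˢ Uᶜ).filter (fun q => ¬ G.Adj q.1 q.2)) := by
      rintro ⟨a, b⟩ h1 ⟨c, d⟩ h2 he
      simp only [Finset.coe_filter, Set.mem_setOf_eq, Finset.mem_product] at h1 h2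
      rcases Sym2.eq_iff.mp he with ⟨rfl, rfl⟩ | ⟨rfl, rfl⟩
      · rfl
      · exact absurd h1.1.1 (Finset.mem_compl.mp h2.1.2)
    have hmcard : (T U).card + cutSize G U = U.card * Uᶜ.card := by
      have himg : (T U).card = ((U ×ˢ Uᶜ).filter (fun q => ¬ G.Adj q.1 q.2)).card := by
        rw [hTdef]
        exact Finset.card_image_of_injOn hinj
      have hsplit := Finset.card_filter_add_card_filter_not
        (s := U ×ˢ Uᶜ) (p := fun q : V × V => G.Adj q.1 q.2)
      rw [Finset.card_product] at hsplit
      have hnegeq : ((U ×ˢ Uᶜ).filter (fun q : V × V => ¬ (fun q : V × V => G.Adj q.1 q.2) q)).card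
          = ((U ×ˢ Uᶜ).filter (fun q => ¬ G.Adj q.1 q.2)).card := by
        congr 1
      unfold cutSize
      omega
    have hab : U.card + Uᶜ.card = n := by
      rw [hn]
      exact Finset.card_add_card_compl U
    have hkey : s * n ≤ 4 * (T U).card := by
      have h1 : s * U.card ≤ Uᶜ.card * U.card := Nat.mul_le_mul_right _ hsUc
      have h2 : s * Uᶜ.card ≤ U.card * Uᶜ.card := Nat.mul_le_mul_right _ hsU
      have h3 : s * n = s * U.card + s * Uᶜ.card := by rw [← hab, Nat.mul_add]
      have h4 : Uᶜ.card * U.card = U.card * Uᶜ.card := Nat.mul_comm _ _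
      have h5 : n ≤ s * n := Nat.le_mul_of_pos_left _ hs1
      have hcut : cutSize G U + 1 ≤ k := hU3
      have hnk' : 4 * k ≤ n := hnk
      linarith
    rw [addProb_avoid G p (T U) (hTsub U)]
    have hm4 : (s : ℝ) * n ≤ 4 * ((T U).card : ℝ) := by exact_mod_cast hkey
    have hspos : (0:ℝ) < s := by exact_mod_cast hs1
    have hsnpos : (0:ℝ) < (s : ℝ) * n := mul_pos hspos hnpos
    have hpm : (c + 2) * Real.log n ≤ p * ((T U).card : ℝ) := by
      rw [hp, div_mul_eq_mul_div, le_div_iff₀ hsnpos]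
      have h9 := mul_le_mul_of_nonneg_left hm4
        (mul_nonneg (by linarith : (0:ℝ) ≤ c + 2) hlog)
      nlinarith [h9]
    calc (1 - p) ^ (T U).card
        ≤ Real.exp (-p) ^ (T U).card := by
          apply pow_le_pow_left₀ (by linarith) (by linarith [Real.add_one_le_exp (-p)])
      _ = Real.exp (((T U).card : ℝ) * (-p)) := (Real.exp_nat_mul _ _).symm
      _ ≤ Real.exp (Real.log n * (-(c + 2))) := by
          apply Real.exp_le_exp.mpr
          nlinarith [hpm]
      _ = (n : ℝ) ^ (-(c + 2)) := (Real.rpow_def_of_pos hnpos _).symm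
  calc ∑ U ∈ smallCuts G k, addProb G p (fun S => S ∩ T U = ∅)
      ≤ ∑ _U ∈ smallCuts G k, (n : ℝ) ^ (-(c+2)) := Finset.sum_le_sum percut
    _ = ((smallCuts G k).card : ℝ) * (n : ℝ) ^ (-(c+2)) := by
        rw [Finset.sum_const, nsmul_eq_mul]
    _ ≤ ((n : ℝ) ^ (2:ℕ)) * (n : ℝ) ^ (-(c+2)) := by
        apply mul_le_mul_of_nonneg_right _ (Real.rpow_nonneg (le_of_lt hnpos) _)
        exact_mod_cast hkarger
    _ = (n : ℝ) ^ (-c) := by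
        rw [← Real.rpow_natCast (n:ℝ) 2, ← Real.rpow_add hnpos]
        norm_num
end

section
/- Stochastic-closeness amplification: Let P be a monotone non-decreasing graph property, G ∉ P a graph on n vertices, and suppose that adding each non-edge independently with probability t/|Ē| yields a graph in P with probability at least 1 − n^{−c}. Then for any positive integer m with m·t ≤ |Ē|, adding each non-edge independently with probability m·t/|Ē| yields a graph in P with probability at least 1 − n^{−mc}. -/
open scoped Classical

open Finset

section Aux
variable {α : Type*} [DecidableEq α]

private lemma step_sum (E : Finset α) (a : α) (ha : a ∉ E) (r : ℝ) (g : Finset α → ℝ) :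
    ∑ T ∈ (insert a E).powerset, r ^ T.card * (1 - r) ^ ((insert a E).card - T.card) * g T
    = (1 - r) * ∑ T ∈ E.powerset, r ^ T.card * (1 - r) ^ (E.card - T.card) * g T
      + r * ∑ T ∈ E.powerset, r ^ T.card * (1 - r) ^ (E.card - T.card) * g (insert a T) := by
  rw [Finset.sum_powerset_insert ha, Finset.mul_sum, Finset.mul_sum]
  congr 1
  · refine Finset.sum_congr rfl fun T hT => ?_
    rw [Finset.mem_powerset] at hT
    rw [Finset.card_insert_of_notMem ha, Nat.succ_sub (Finset.card_le_card hT), pow_succ]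
    ring
  · refine Finset.sum_congr rfl fun T hT => ?_
    rw [Finset.mem_powerset] at hT
    have haT : a ∉ T := fun h => ha (hT h)
    rw [Finset.card_insert_of_notMem ha, Finset.card_insert_of_notMem haT,
      Nat.add_sub_add_right, pow_succ]
    ring

private lemma sum_mul_comb (E : Finset α) (w A B : Finset α → ℝ) (c d : ℝ) :
    ∑ S ∈ E.powerset, w S * (c * A S + d * B S)
    = c * ∑ S ∈ E.powerset, w S * A S + d * ∑ S ∈ E.powerset, w S * B S := by
  rw [Finset.mul_sum, Finset.mul_sum, ← Finset.sum_add_distrib]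
  exact Finset.sum_congr rfl fun _ _ => by ring

private lemma conv (E : Finset α) (p q : ℝ) : ∀ g : Finset α → ℝ,
    ∑ S₁ ∈ E.powerset, p ^ S₁.card * (1 - p) ^ (E.card - S₁.card) *
      ∑ S₂ ∈ E.powerset, q ^ S₂.card * (1 - q) ^ (E.card - S₂.card) * g (S₁ ∪ S₂)
    = ∑ T ∈ E.powerset, (p + q - p * q) ^ T.card *
        (1 - (p + q - p * q)) ^ (E.card - T.card) * g T := by
  induction E using Finset.induction_on with
  | empty => intro g; simp
  | @insert a E ha ih =>
    intro g
    rw [step_sum E a ha p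
      (fun S₁ => ∑ S₂ ∈ (insert a E).powerset,
        q ^ S₂.card * (1 - q) ^ ((insert a E).card - S₂.card) * g (S₁ ∪ S₂))]
    simp only [step_sum E a ha q, Finset.union_insert, Finset.insert_union,
      Finset.insert_idem]
    rw [sum_mul_comb, sum_mul_comb, ih g, ih (fun T => g (insert a T)),
      step_sum E a ha (p + q - p * q) g]
    ring

private lemma sum_w (E : Finset α) (p : ℝ) :
    ∑ S ∈ E.powerset, p ^ S.card * (1 - p) ^ (E.card - S.card) = 1 := by
  induction E using Finset.induction_on with
  | empty => simp
  | @insert a E ha ih =>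
    have h := step_sum E a ha p (fun _ => (1 : ℝ))
    simp only [mul_one] at h
    rw [h, ih]; ring

/-- probability of monotone event under independent inclusion with prob `p` -/
private noncomputable def fpr (E : Finset α) (p : ℝ) (A : Finset α → Prop) : ℝ :=
  ∑ S ∈ E.powerset, if A S then p ^ S.card * (1 - p) ^ (E.card - S.card) else 0

private lemma fpr_eq (E : Finset α) (p : ℝ) (A : Finset α → Prop) :
    fpr E p A = ∑ S ∈ E.powerset,
      p ^ S.card * (1 - p) ^ (E.card - S.card) * (if A S then (1:ℝ) else 0) := by
  refine Finset.sum_congr rfl fun S _ => ?_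
  by_cases h : A S <;> simp [h]

private lemma w_nonneg (E : Finset α) {p : ℝ} (h0 : 0 ≤ p) (h1 : p ≤ 1) (S : Finset α) :
    0 ≤ p ^ S.card * (1 - p) ^ (E.card - S.card) :=
  mul_nonneg (pow_nonneg h0 _) (pow_nonneg (by linarith) _)

private lemma fpr_nonneg (E : Finset α) {p : ℝ} (h0 : 0 ≤ p) (h1 : p ≤ 1)
    (A : Finset α → Prop) : 0 ≤ fpr E p A := by
  refine Finset.sum_nonneg fun S _ => ?_
  by_cases h : A S <;> simp [h, w_nonneg E h0 h1 S]

private lemma fpr_le_one (E : Finset α) {p : ℝ} (h0 : 0 ≤ p) (h1 : p ≤ 1)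
    (A : Finset α → Prop) : fpr E p A ≤ 1 := by
  rw [← sum_w E p]
  refine Finset.sum_le_sum fun S _ => ?_
  by_cases h : A S <;> simp [h, w_nonneg E h0 h1 S]

private lemma amp2 (E : Finset α) (A : Finset α → Prop)
    (hA : ∀ S T : Finset α, S ⊆ T → A S → A T)
    {p q : ℝ} (hp0 : 0 ≤ p) (hp1 : p ≤ 1) (hq0 : 0 ≤ q) (hq1 : q ≤ 1) :
    1 - (1 - fpr E p A) * (1 - fpr E q A) ≤ fpr E (p + q - p * q) A := by
  have hconv := conv E p q (fun S => if A S then (1:ℝ) else 0)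
  rw [fpr_eq E (p + q - p * q) A, ← hconv]
  have key : ∀ S₁ ∈ E.powerset,
      p ^ S₁.card * (1 - p) ^ (E.card - S₁.card) *
        ∑ S₂ ∈ E.powerset, q ^ S₂.card * (1 - q) ^ (E.card - S₂.card) *
          ((if A S₁ then (1:ℝ) else 0) + (if A S₂ then (1:ℝ) else 0)
            - (if A S₁ then (1:ℝ) else 0) * (if A S₂ then (1:ℝ) else 0))
      ≤ p ^ S₁.card * (1 - p) ^ (E.card - S₁.card) *
        ∑ S₂ ∈ E.powerset, q ^ S₂.card * (1 - q) ^ (E.card - S₂.card) *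
          (if A (S₁ ∪ S₂) then (1:ℝ) else 0) := by
    intro S₁ _
    refine mul_le_mul_of_nonneg_left (Finset.sum_le_sum fun S₂ _ => ?_)
      (w_nonneg E hp0 hp1 S₁)
    refine mul_le_mul_of_nonneg_left ?_ (w_nonneg E hq0 hq1 S₂)
    by_cases h1 : A S₁
    · have : A (S₁ ∪ S₂) := hA S₁ _ Finset.subset_union_left h1
      by_cases h2 : A S₂ <;> simp [h1, h2, this]
    · by_cases h2 : A S₂
      · have : A (S₁ ∪ S₂) := hA S₂ _ Finset.subset_union_right h2
        simp [h1, h2, this]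
      · simp [h1, h2]
        positivity
  refine le_trans (le_of_eq ?_) (Finset.sum_le_sum key)
  -- show 1 - (1 - fp)(1 - fq) = the double sum with (a + b - a*b)
  have inner : ∀ S₁ : Finset α,
      ∑ S₂ ∈ E.powerset, q ^ S₂.card * (1 - q) ^ (E.card - S₂.card) *
          ((if A S₁ then (1:ℝ) else 0) + (if A S₂ then (1:ℝ) else 0)
            - (if A S₁ then (1:ℝ) else 0) * (if A S₂ then (1:ℝ) else 0))
      = (if A S₁ then (1:ℝ) else 0) + (1 - (if A S₁ then (1:ℝ) else 0)) * fpr E q A := by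
    intro S₁
    have : ∀ S₂ ∈ E.powerset,
        q ^ S₂.card * (1 - q) ^ (E.card - S₂.card) *
          ((if A S₁ then (1:ℝ) else 0) + (if A S₂ then (1:ℝ) else 0)
            - (if A S₁ then (1:ℝ) else 0) * (if A S₂ then (1:ℝ) else 0))
        = (if A S₁ then (1:ℝ) else 0) * (q ^ S₂.card * (1 - q) ^ (E.card - S₂.card))
          + (1 - (if A S₁ then (1:ℝ) else 0)) *
            (q ^ S₂.card * (1 - q) ^ (E.card - S₂.card) * (if A S₂ then (1:ℝ) else 0)) := by
      intro S₂ _; ring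
    rw [Finset.sum_congr rfl this, Finset.sum_add_distrib, ← Finset.mul_sum, ← Finset.mul_sum,
      sum_w E q, mul_one, ← fpr_eq]
  calc 1 - (1 - fpr E p A) * (1 - fpr E q A)
      = (1 - fpr E q A) * fpr E p A + fpr E q A := by ring
    _ = ∑ S₁ ∈ E.powerset, p ^ S₁.card * (1 - p) ^ (E.card - S₁.card) *
          ((1 - fpr E q A) * (if A S₁ then (1:ℝ) else 0) + fpr E q A * 1) := by
        rw [sum_mul_comb E (fun S₁ => p ^ S₁.card * (1 - p) ^ (E.card - S₁.card))
          (fun S₁ => if A S₁ then (1:ℝ) else 0) (fun _ => (1:ℝ))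
          (1 - fpr E q A) (fpr E q A), ← fpr_eq]
        simp only [mul_one, sum_w E p]
    _ = ∑ S₁ ∈ E.powerset, p ^ S₁.card * (1 - p) ^ (E.card - S₁.card) *
          ((if A S₁ then (1:ℝ) else 0) + (1 - (if A S₁ then (1:ℝ) else 0)) * fpr E q A) :=
        Finset.sum_congr rfl fun S₁ _ => by ring
    _ = _ := by
        refine Finset.sum_congr rfl fun S₁ _ => ?_
        rw [inner S₁]


private lemma amp (E : Finset α) (A : Finset α → Prop)
    (hA : ∀ S T : Finset α, S ⊆ T → A S → A T)
    {q : ℝ} (hq0 : 0 ≤ q) (hq1 : q ≤ 1) (m : ℕ) :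
    1 - (1 - fpr E q A) ^ m ≤ fpr E (1 - (1 - q) ^ m) A := by
  induction m with
  | zero => simpa using fpr_nonneg E le_rfl zero_le_one A
  | succ m ih =>
    have hrm0 : 0 ≤ 1 - (1 - q) ^ m := by
      have : (1 - q) ^ m ≤ 1 := pow_le_one₀ (by linarith) (by linarith)
      linarith
    have hrm1 : 1 - (1 - q) ^ m ≤ 1 := by
      have : 0 ≤ (1 - q) ^ m := pow_nonneg (by linarith) m
      linarith
    have h2 := amp2 E A hA hq0 hq1 hrm0 hrm1
    have heq : q + (1 - (1 - q) ^ m) - q * (1 - (1 - q) ^ m) = 1 - (1 - q) ^ (m + 1) := by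
      rw [pow_succ]; ring
    rw [heq] at h2
    have h1q : 0 ≤ 1 - fpr E q A := by
      have := fpr_le_one E hq0 hq1 A; linarith
    have hmul : (1 - fpr E q A) * (1 - fpr E (1 - (1 - q) ^ m) A)
        ≤ (1 - fpr E q A) * (1 - fpr E q A) ^ m :=
      mul_le_mul_of_nonneg_left (by linarith) h1q
    rw [pow_succ]
    nlinarith [hmul, h2]

private lemma fpr_mono (E : Finset α) (A : Finset α → Prop)
    (hA : ∀ S T : Finset α, S ⊆ T → A S → A T)
    {p₁ p₂ : ℝ} (h0 : 0 ≤ p₁) (h12 : p₁ ≤ p₂) (h1 : p₂ ≤ 1) :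
    fpr E p₁ A ≤ fpr E p₂ A := by
  rcases eq_or_lt_of_le (le_trans h12 h1) with h | hlt
  · have : p₁ = p₂ := le_antisymm h12 (by rw [h]; exact h1)
    rw [this]
  · set s := (p₂ - p₁) / (1 - p₁) with hs
    have h1p : (0:ℝ) < 1 - p₁ := by linarith
    have hs0 : 0 ≤ s := div_nonneg (by linarith) h1p.le
    have hs1 : s ≤ 1 := (div_le_one h1p).mpr (by linarith)
    have heq : p₁ + s - p₁ * s = p₂ := by
      have hsm : s * (1 - p₁) = p₂ - p₁ := div_mul_cancel₀ _ h1p.ne'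
      linear_combination hsm
    have h2 := amp2 E A hA h0 hlt.le hs0 hs1
    rw [heq] at h2
    have := fpr_le_one E h0 hlt.le A
    have := fpr_nonneg E hs0 hs1 A
    nlinarith

end Aux

/-- Stochastic-closeness amplification: if adding each non-edge with probability
`t/|Ē|` yields a graph in the monotone property `P` with probability at least
`1 - n^{-c}`, then for `m·t ≤ |Ē|`, adding each non-edge with probability `m·t/|Ē|`
yields a graph in `P` with probability at least `1 - n^{-mc}`. -/
theorem stochastic_closeness_amplification {V : Type*} [Fintype V] (G : SimpleGraph V)
    (P : SimpleGraph V → Prop)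
    (hmono : ∀ H H' : SimpleGraph V, H ≤ H' → P H → P H')
    (hG : ¬ P G)
    (n : ℕ) (hn : n = Fintype.card V) (hn2 : 2 ≤ n)
    (N : ℕ) (hN : N = Gᶜ.edgeFinset.card) (hNpos : 0 < N)
    (c : ℝ) (hc : 1 < c)
    (t : ℝ) (ht0 : 0 ≤ t) (htN : t ≤ N)
    (hclose : 1 - (n : ℝ) ^ (-c) ≤
      addProb G (t / N) (fun S => P (G ⊔ SimpleGraph.fromEdgeSet (↑S : Set (Sym2 V)))))
    (m : ℕ) (hm : 1 ≤ m) (hmt : (m : ℝ) * t ≤ N) :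
    1 - (n : ℝ) ^ (-((m : ℝ) * c)) ≤
      addProb G ((m : ℝ) * t / N)
        (fun S => P (G ⊔ SimpleGraph.fromEdgeSet (↑S : Set (Sym2 V)))) := by
  set E := Gᶜ.edgeFinset with hE
  set A : Finset (Sym2 V) → Prop :=
    fun S => P (G ⊔ SimpleGraph.fromEdgeSet (↑S : Set (Sym2 V))) with hAdef
  have hA : ∀ S T : Finset (Sym2 V), S ⊆ T → A S → A T := by
    intro S T hST h
    exact hmono _ _ (sup_le_sup_left (SimpleGraph.fromEdgeSet_mono
      (Finset.coe_subset.mpr hST)) G) h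
  have haddp : ∀ p : ℝ, addProb G p A = fpr E p A := fun p => rfl
  rw [haddp] at hclose ⊢
  have hNr : (0:ℝ) < N := by exact_mod_cast hNpos
  have hq0 : 0 ≤ t / N := div_nonneg ht0 hNr.le
  have hq1 : t / N ≤ 1 := (div_le_one hNr).mpr htN
  have hmq0 : 0 ≤ (m:ℝ) * t / N := div_nonneg (by positivity) hNr.le
  have hmq1 : (m:ℝ) * t / N ≤ 1 := (div_le_one hNr).mpr hmt
  have hBern : 1 - (1 - t / N) ^ m ≤ (m:ℝ) * t / N := by
    have h := one_add_mul_le_pow (a := -(t / N)) (by linarith) m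
    rw [mul_div_assoc]
    have : (1 + -(t/N)) = 1 - t/N := by ring
    rw [this] at h
    nlinarith [h]
  have hrm0 : 0 ≤ 1 - (1 - t / N) ^ m := by
    have : (1 - t/N) ^ m ≤ 1 := pow_le_one₀ (by linarith) (by linarith)
    linarith
  have h1 : fpr E (1 - (1 - t / N) ^ m) A ≤ fpr E ((m:ℝ) * t / N) A :=
    fpr_mono E A hA hrm0 hBern hmq1
  have h2 := amp E A hA hq0 hq1 m
  have hfq1 := fpr_le_one E hq0 hq1 A
  have hpow : (1 - fpr E (t / N) A) ^ m ≤ ((n:ℝ) ^ (-c)) ^ m :=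
    pow_le_pow_left₀ (by linarith) (by linarith) m
  have hrw : ((n:ℝ) ^ (-c)) ^ m = (n : ℝ) ^ (-((m : ℝ) * c)) := by
    have hn0 : (0:ℝ) ≤ n := by positivity
    rw [← Real.rpow_natCast ((n:ℝ) ^ (-c)) m, ← Real.rpow_mul hn0]
    congr 1
    ring
  rw [← hrw]
  linarith
end
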